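/- Under the setup of the bias decomposition theorem (exogenous noise $Z \mid U \sim p(\cdot \mid U)$, treatment $W = \mathbf{1}\{Z \geq c\}$), suppose additionally that $\tau(u) = \tau$ is constant in $u$, that there exist constants $M \geq 0$ and $\alpha_{(0)} \in \mathbb{R}$ with $|\alpha_{(0)}(u) - \alpha_{(0)}| \leq M$ for all $u$, and that the weights are normalized: $\mathbb{E}[\gamma_+(Z)\mathbf{1}\{Z \geq c\}] = 1$ and $\mathbb{E}[\gamma_-(Z)\mathbf{1}\{Z < c\}] = 1$. Then $|\mathbb{E}[\gamma_+(Z) Y \mathbf{1}\{Z \geq c\}] - \mathbb{E}[\gamma_-(Z) Y \mathbf{1}\{Z < c\}] - \tau| \leq M \sup_{u \in \mathbb{R}} |h_+(u) - h_-(u)|$. -/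

import Mathlib

open MeasureTheory

/-- Corollary 1: under constant treatment effects and normalized weights, the
bias of the weighted estimator is bounded by `M` times any uniform bound on
`|h₊ - h₋|` (hence by `M · sup_u |h₊(u) - h₋(u)|`). -/
theorem stmt1
    {Ω : Type*} [MeasurableSpace Ω] (P : Measure Ω) [IsProbabilityMeasure P]
    (U Z Y0 Y1 : Ω → ℝ)
    (hUm : Measurable U) (hZm : Measurable Z)
    (hY0m : Measurable Y0) (hY1m : Measurable Y1)
    (CY : ℝ) (hY0b : ∀ ω, |Y0 ω| ≤ CY) (hY1b : ∀ ω, |Y1 ω| ≤ CY)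
    (G : Measure ℝ) [IsProbabilityMeasure G]
    (lam : Measure ℝ) [SigmaFinite lam]
    (p : ℝ → ℝ → ℝ) (hpm : Measurable (Function.uncurry p)) (hpnn : ∀ z u, 0 ≤ p z u)
    (α0 α1 τ : ℝ → ℝ) (hα0m : Measurable α0) (hα1m : Measurable α1)
    (hτdef : ∀ u, τ u = α1 u - α0 u)
    (hJoint0 : ∀ g φf : ℝ → ℝ, Measurable g → Measurable φf →
      (∃ Cg, ∀ z, |g z| ≤ Cg) → (∃ Cf, ∀ u, |φf u| ≤ Cf) →
      ∫ ω, Y0 ω * g (Z ω) * φf (U ω) ∂P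
        = ∫ u, α0 u * (∫ z, g z * p z u ∂lam) * φf u ∂G)
    (hJoint1 : ∀ g φf : ℝ → ℝ, Measurable g → Measurable φf →
      (∃ Cg, ∀ z, |g z| ≤ Cg) → (∃ Cf, ∀ u, |φf u| ≤ Cf) →
      ∫ ω, Y1 ω * g (Z ω) * φf (U ω) ∂P
        = ∫ u, α1 u * (∫ z, g z * p z u ∂lam) * φf u ∂G)
    -- marginal density of Z (Assumption 2):
    (hDens : ∀ g : ℝ → ℝ, Measurable g → (∃ Cg, ∀ z, |g z| ≤ Cg) →
      ∫ ω, g (Z ω) ∂P = ∫ u, (∫ z, g z * p z u ∂lam) ∂G)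
    (c : ℝ) (γp γm : ℝ → ℝ) (hγpm : Measurable γp) (hγmm : Measurable γm)
    (Cγ : ℝ) (hγpb : ∀ z, |γp z| ≤ Cγ) (hγmb : ∀ z, |γm z| ≤ Cγ)
    (hplus hminus : ℝ → ℝ)
    (hhp : ∀ u, hplus u = ∫ z in Set.Ici c, γp z * p z u ∂lam)
    (hhm : ∀ u, hminus u = ∫ z in Set.Iio c, γm z * p z u ∂lam)
    -- normalization of the weights:
    (hnormp : ∫ ω, (if c ≤ Z ω then γp (Z ω) else 0) ∂P = 1)
    (hnormm : ∫ ω, (if Z ω < c then γm (Z ω) else 0) ∂P = 1)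
    -- constant treatment effect and uniform bound on the control response:
    (τ0 : ℝ) (hτconst : ∀ u, τ u = τ0)
    (M a0 : ℝ) (hMa : ∀ u, |α0 u - a0| ≤ M) :
    ∀ B : ℝ, (∀ u, |hplus u - hminus u| ≤ B) →
      |(∫ ω, (if c ≤ Z ω then γp (Z ω) * (if c ≤ Z ω then Y1 ω else Y0 ω) else 0) ∂P)
        - (∫ ω, (if Z ω < c then γm (Z ω) * (if c ≤ Z ω then Y1 ω else Y0 ω) else 0) ∂P)
        - τ0| ≤ M * B := by
  intro B hB
  have hCγ0 : 0 ≤ Cγ := le_trans (abs_nonneg _) (hγpb 0)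
  -- the truncated weight functions
  have hgpm : Measurable (fun z : ℝ => if c ≤ z then γp z else 0) :=
    Measurable.ite measurableSet_Ici hγpm measurable_const
  have hgmm : Measurable (fun z : ℝ => if z < c then γm z else 0) :=
    Measurable.ite measurableSet_Iio hγmm measurable_const
  have hgpb : ∀ z, |(fun z : ℝ => if c ≤ z then γp z else 0) z| ≤ Cγ := by
    intro z; by_cases h : c ≤ z <;> simp [h, hγpb z, hCγ0]
  have hgmb : ∀ z, |(fun z : ℝ => if z < c then γm z else 0) z| ≤ Cγ := by
    intro z; by_cases h : z < c <;> simp [h, hγmb z, hCγ0]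
  -- inner integrals equal hplus / hminus
  have hinnp : ∀ u, (∫ z, (if c ≤ z then γp z else 0) * p z u ∂lam) = hplus u := by
    intro u
    rw [hhp u, ← integral_indicator measurableSet_Ici]
    congr 1; funext z
    by_cases h : c ≤ z <;> simp [Set.indicator_apply, Set.mem_Ici, h]
  have hinnm : ∀ u, (∫ z, (if z < c then γm z else 0) * p z u ∂lam) = hminus u := by
    intro u
    rw [hhm u, ← integral_indicator measurableSet_Iio]
    congr 1; funext z
    by_cases h : z < c <;> simp [Set.indicator_apply, Set.mem_Iio, h]
  -- normalizations on the G side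
  have Np : ∫ u, hplus u ∂G = 1 := by
    have h := hDens (fun z => if c ≤ z then γp z else 0) hgpm ⟨Cγ, hgpb⟩
    rw [hnormp] at h
    rw [h]
    exact integral_congr_ae (Filter.Eventually.of_forall fun u => (hinnp u).symm)
  have Nm : ∫ u, hminus u ∂G = 1 := by
    have h := hDens (fun z => if z < c then γm z else 0) hgmm ⟨Cγ, hgmb⟩
    rw [hnormm] at h
    rw [h]
    exact integral_congr_ae (Filter.Eventually.of_forall fun u => (hinnm u).symm)
  -- integrability of hplus, hminus
  have Ihp : Integrable hplus G := by
    by_contra h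
    rw [integral_undef h] at Np
    norm_num at Np
  have Ihm : Integrable hminus G := by
    by_contra h
    rw [integral_undef h] at Nm
    norm_num at Nm
  -- α0 is bounded
  have hα0b : ∀ u, |α0 u| ≤ M + |a0| := by
    intro u
    have := hMa u
    have h1 : |α0 u| ≤ |α0 u - a0| + |a0| := by
      calc |α0 u| = |(α0 u - a0) + a0| := by ring_nf
        _ ≤ |α0 u - a0| + |a0| := abs_add_le _ _
    linarith
  have Iα0hp : Integrable (fun u => α0 u * hplus u) G :=
    Ihp.bdd_mul hα0m.aestronglyMeasurable (c := M + |a0|) (Filter.Eventually.of_forall fun u => by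
      simpa [Real.norm_eq_abs] using hα0b u)
  have Iα0hm : Integrable (fun u => α0 u * hminus u) G :=
    Ihm.bdd_mul hα0m.aestronglyMeasurable (c := M + |a0|) (Filter.Eventually.of_forall fun u => by
      simpa [Real.norm_eq_abs] using hα0b u)
  -- first estimator integral
  have T1 : (∫ ω, (if c ≤ Z ω then γp (Z ω) * (if c ≤ Z ω then Y1 ω else Y0 ω) else 0) ∂P)
      = ∫ u, α1 u * hplus u ∂G := by
    have e1 : (∫ ω, (if c ≤ Z ω then γp (Z ω) * (if c ≤ Z ω then Y1 ω else Y0 ω) else 0) ∂P)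
        = ∫ ω, Y1 ω * (if c ≤ Z ω then γp (Z ω) else 0) * (1 : ℝ) ∂P := by
      apply integral_congr_ae
      filter_upwards with ω
      by_cases h : c ≤ Z ω <;> simp [h, mul_comm]
    have e2 := hJoint1 (fun z => if c ≤ z then γp z else 0) (fun _ => 1) hgpm
      measurable_const ⟨Cγ, hgpb⟩ ⟨1, fun u => by norm_num⟩
    rw [e1, e2]
    apply integral_congr_ae
    filter_upwards with u
    rw [hinnp u, mul_one]
  -- second estimator integral
  have T2 : (∫ ω, (if Z ω < c then γm (Z ω) * (if c ≤ Z ω then Y1 ω else Y0 ω) else 0) ∂P)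
      = ∫ u, α0 u * hminus u ∂G := by
    have e1 : (∫ ω, (if Z ω < c then γm (Z ω) * (if c ≤ Z ω then Y1 ω else Y0 ω) else 0) ∂P)
        = ∫ ω, Y0 ω * (if Z ω < c then γm (Z ω) else 0) * (1 : ℝ) ∂P := by
      apply integral_congr_ae
      filter_upwards with ω
      by_cases h : Z ω < c <;> simp [h, not_le_of_gt, mul_comm]
    have e2 := hJoint0 (fun z => if z < c then γm z else 0) (fun _ => 1) hgmm
      measurable_const ⟨Cγ, hgmb⟩ ⟨1, fun u => by norm_num⟩
    rw [e1, e2]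
    apply integral_congr_ae
    filter_upwards with u
    rw [hinnm u, mul_one]
  -- α1 = α0 + τ0 pointwise
  have hα1 : ∀ u, α1 u = α0 u + τ0 := by
    intro u
    have h1 := hτdef u
    have h2 := hτconst u
    linarith
  have key : ∫ u, α1 u * hplus u ∂G = (∫ u, α0 u * hplus u ∂G) + τ0 := by
    have e : (fun u => α1 u * hplus u) = fun u => α0 u * hplus u + τ0 * hplus u := by
      funext u; rw [hα1 u]; ring
    rw [e, integral_add Iα0hp (Ihp.const_mul τ0), integral_const_mul, Np, mul_one]
  -- the difference equals a single G-integral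
  have final : (∫ ω, (if c ≤ Z ω then γp (Z ω) * (if c ≤ Z ω then Y1 ω else Y0 ω) else 0) ∂P)
      - (∫ ω, (if Z ω < c then γm (Z ω) * (if c ≤ Z ω then Y1 ω else Y0 ω) else 0) ∂P)
      - τ0 = ∫ u, (α0 u - a0) * (hplus u - hminus u) ∂G := by
    have expand : (fun u => (α0 u - a0) * (hplus u - hminus u))
        = fun u => (α0 u * hplus u - α0 u * hminus u) - (a0 * hplus u - a0 * hminus u) := by
      funext u; ring
    have I1 : Integrable (fun u => α0 u * hplus u - α0 u * hminus u) G := Iα0hp.sub Iα0hm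
    have I2 : Integrable (fun u => a0 * hplus u - a0 * hminus u) G :=
      (Ihp.const_mul a0).sub (Ihm.const_mul a0)
    rw [T1, T2, key, expand, integral_sub I1 I2, integral_sub Iα0hp Iα0hm,
      integral_sub (Ihp.const_mul a0) (Ihm.const_mul a0),
      integral_const_mul, integral_const_mul, Np, Nm]
    ring
  rw [final]
  have hbnd : ∀ u, ‖(α0 u - a0) * (hplus u - hminus u)‖ ≤ M * B := by
    intro u
    rw [Real.norm_eq_abs, abs_mul]
    exact mul_le_mul (hMa u) (hB u) (abs_nonneg _) (le_trans (abs_nonneg _) (hMa u))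
  calc |∫ u, (α0 u - a0) * (hplus u - hminus u) ∂G|
      = ‖∫ u, (α0 u - a0) * (hplus u - hminus u) ∂G‖ := (Real.norm_eq_abs _).symm
    _ ≤ M * B * (G Set.univ).toReal :=
        norm_integral_le_of_norm_le_const (Filter.Eventually.of_forall hbnd)
    _ = M * B := by simp
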